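/- For square-integrable random vectors: E‖v_θ(t, x_t) - u_t(x_t)‖² differs from E_z E‖v_θ(t, x_t) - u_t(x_t | z)‖² by a constant independent of θ, where u_t(x) = E[u_t(x | z) | x_t = x]. Hence the gradients with respect to the parameter of v_θ of the two losses agree: minimizing the conditional (tractable) loss is equivalent to minimizing the marginal loss. -/

import Mathlib

open MeasureTheory ProbabilityTheory

lemma memLp_mul_integrable {Ω : Type*} {m0 : MeasurableSpace Ω} {μ : Measure Ω}
    {g c : Ω → ℝ} (hg : MemLp g 2 μ) (hc : MemLp c 2 μ) :
    Integrable (fun ω => g ω * c ω) μ := by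
  have := hc.smul hg (p := 2) (q := 2) (r := 1)
  rw [← memLp_one_iff_integrable]
  exact this

lemma real_pyth {Ω : Type*} {m : MeasurableSpace Ω} {m0 : MeasurableSpace Ω}
    {μ : Measure Ω} [IsProbabilityMeasure μ] (hm : m ≤ m0)
    {a b c : Ω → ℝ} (ha : MemLp a 2 μ) (hb : MemLp b 2 μ)
    (hc : MemLp c 2 μ)
    (ham : StronglyMeasurable[m] a) (hbm : StronglyMeasurable[m] b)
    (hcond : μ[c|m] =ᵐ[μ] b) :
    ∫ ω, (a ω - c ω) ^ 2 ∂μ = (∫ ω, (a ω - b ω) ^ 2 ∂μ) + ∫ ω, (b ω - c ω) ^ 2 ∂μ := by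
  have hab : MemLp (fun ω => a ω - b ω) 2 μ := ha.sub hb
  have hbc : MemLp (fun ω => b ω - c ω) 2 μ := hb.sub hc
  have hgc : Integrable (fun ω => (a ω - b ω) * c ω) μ :=
    memLp_mul_integrable hab hc
  have hgb : Integrable (fun ω => (a ω - b ω) * b ω) μ :=
    memLp_mul_integrable hab hb
  have hc_int : Integrable c μ := hc.integrable one_le_two
  have cross : ∫ ω, (a ω - b ω) * c ω ∂μ = ∫ ω, (a ω - b ω) * b ω ∂μ := by
    have hpull : μ[(fun ω => a ω - b ω) * c|m]
        =ᵐ[μ] (fun ω => a ω - b ω) * μ[c|m] :=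
      condExp_mul_of_stronglyMeasurable_left (ham.sub hbm) hgc hc_int
    calc ∫ ω, (a ω - b ω) * c ω ∂μ
        = ∫ ω, (μ[(fun ω => a ω - b ω) * c|m]) ω ∂μ := (integral_condExp hm).symm
      _ = ∫ ω, (a ω - b ω) * b ω ∂μ := by
          refine integral_congr_ae ?_
          filter_upwards [hpull, hcond] with ω h1 h2
          simp only [Pi.mul_apply] at h1 ⊢
          rw [h1, h2]
  have hz : ∫ ω, (a ω - b ω) * (b ω - c ω) ∂μ = 0 := by
    have : (fun ω => (a ω - b ω) * (b ω - c ω))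
        = fun ω => (a ω - b ω) * b ω - (a ω - b ω) * c ω := by funext ω; ring
    rw [this, integral_sub hgb hgc, cross, sub_self]
  have I1 : Integrable (fun ω => (a ω - b ω) ^ 2) μ := hab.integrable_sq
  have I2 : Integrable (fun ω => (b ω - c ω) ^ 2) μ := hbc.integrable_sq
  have I3 : Integrable (fun ω => (a ω - b ω) * (b ω - c ω)) μ :=
    memLp_mul_integrable hab hbc
  have expand : (fun ω => (a ω - c ω) ^ 2)
      = fun ω => ((a ω - b ω) ^ 2 + (b ω - c ω) ^ 2) + 2 * ((a ω - b ω) * (b ω - c ω)) := by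
    funext ω; ring
  have I12 : Integrable (fun ω => (a ω - b ω) ^ 2 + (b ω - c ω) ^ 2) μ := I1.add I2
  have Iz : Integrable (fun ω => 2 * ((a ω - b ω) * (b ω - c ω))) μ := I3.const_mul 2
  rw [expand, integral_add I12 Iz, integral_add I1 I2, MeasureTheory.integral_const_mul, hz]
  ring

lemma euclidean_pyth_aux {d : ℕ} {Ω : Type*} {m : MeasurableSpace Ω}
    {m0 : MeasurableSpace Ω} {μ : Measure Ω} [IsProbabilityMeasure μ] (hm : m ≤ m0)
    {A B U : Ω → EuclideanSpace ℝ (Fin d)}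
    (hA2 : MemLp A 2 μ) (hU2 : MemLp U 2 μ)
    (hAm : Measurable[m] A) (hBm : Measurable[m] B)
    (hcond : μ[U|m] =ᵐ[μ] B) :
    ∫ ω, ‖A ω - U ω‖ ^ 2 ∂μ
      = (∫ ω, ‖A ω - B ω‖ ^ 2 ∂μ) + ∫ ω, ‖B ω - U ω‖ ^ 2 ∂μ := by
  have hBint : Integrable B μ := integrable_condExp.congr hcond
  have hUint : Integrable U μ := hU2.integrable one_le_two
  have hsetB : ∀ s : Set Ω, MeasurableSet[m] s → ∫ x in s, B x ∂μ = ∫ x in s, U x ∂μ := by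
    intro s hs
    rw [← setIntegral_condExp hm hUint hs]
    exact integral_congr_ae (Filter.EventuallyEq.restrict hcond.symm)
  -- B is square integrable, by comparison with condexpL2
  have hBL2 : MemLp B 2 μ := by
    let ULp : Lp (EuclideanSpace ℝ (Fin d)) 2 μ := hU2.toLp U
    let BL := (condExpL2 (EuclideanSpace ℝ (Fin d)) ℝ hm ULp : Lp (EuclideanSpace ℝ (Fin d)) 2 μ)
    have hBL : B =ᵐ[μ] BL := by
      refine ae_eq_of_forall_setIntegral_eq_of_sigmaFinite' hm
        (fun s _ _ => hBint.integrableOn)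
        (fun s _ _ => ((Lp.memLp BL).integrable one_le_two).integrableOn)
        (fun s hs hμs => ?_)
        hBm.stronglyMeasurable.aestronglyMeasurable (aestronglyMeasurable_condExpL2 hm ULp)
      rw [hsetB s hs, integral_condExpL2_eq hm ULp hs hμs.ne]
      exact integral_congr_ae (Filter.EventuallyEq.restrict (hU2.coeFn_toLp).symm)
    exact (Lp.memLp BL).ae_eq hBL.symm
  -- coordinatewise conditional expectation
  have hcond_i : ∀ i : Fin d,
      μ[(fun ω => U ω i)|m] =ᵐ[μ] fun ω => B ω i := by
    intro i
    set π : EuclideanSpace ℝ (Fin d) →L[ℝ] ℝ := EuclideanSpace.proj i with hπ_def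
    have hπB : Integrable (fun ω => π (B ω)) μ := π.integrable_comp hBint
    refine (ae_eq_condExp_of_forall_setIntegral_eq hm
      (π.integrable_comp hUint)
      (fun s _ _ => hπB.integrableOn)
      (fun s hs hμs => ?_)
      ((π.measurable.comp hBm).stronglyMeasurable.aestronglyMeasurable)).symm
    have h1 : ∫ x in s, π (B x) ∂μ = π (∫ x in s, B x ∂μ) :=
      π.integral_comp_comm hBint.integrableOn
    have h2 : ∫ x in s, π (U x) ∂μ = π (∫ x in s, U x ∂μ) :=
      π.integral_comp_comm hUint.integrableOn
    show ∫ x in s, π (B x) ∂μ = ∫ x in s, π (U x) ∂μ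
    rw [h1, h2, hsetB s hs]
  -- coordinatewise Pythagoras
  have hproj : ∀ (g : Ω → EuclideanSpace ℝ (Fin d)), MemLp g 2 μ → ∀ i : Fin d,
      MemLp (fun ω => g ω i) 2 μ := by
    intro g hg i
    exact (EuclideanSpace.proj (𝕜 := ℝ) i).comp_memLp' hg
  have key : ∀ i : Fin d,
      ∫ ω, (A ω i - U ω i) ^ 2 ∂μ
        = (∫ ω, (A ω i - B ω i) ^ 2 ∂μ) + ∫ ω, (B ω i - U ω i) ^ 2 ∂μ := by
    intro i
    refine real_pyth hm (hproj A hA2 i) (hproj B hBL2 i) (hproj U hU2 i) ?_ ?_ (hcond_i i)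
    · exact ((EuclideanSpace.proj (𝕜 := ℝ) i).continuous.measurable.comp hAm).stronglyMeasurable
    · exact ((EuclideanSpace.proj (𝕜 := ℝ) i).continuous.measurable.comp hBm).stronglyMeasurable
  -- sum over coordinates
  have norm_sq : ∀ v : EuclideanSpace ℝ (Fin d), ‖v‖ ^ 2 = ∑ i, (v i) ^ 2 := by
    intro v
    rw [EuclideanSpace.norm_eq, Real.sq_sqrt (by positivity)]
    simp [Real.norm_eq_abs, sq_abs]
  have sum_int : ∀ (g : Ω → EuclideanSpace ℝ (Fin d)), MemLp g 2 μ →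
      ∫ ω, ‖g ω‖ ^ 2 ∂μ = ∑ i, ∫ ω, (g ω i) ^ 2 ∂μ := by
    intro g hg
    rw [← integral_finset_sum _ (fun i _ => (hproj g hg i).integrable_sq)]
    exact integral_congr_ae (Filter.Eventually.of_forall fun ω => norm_sq (g ω))
  have e1 : ∫ ω, ‖A ω - U ω‖ ^ 2 ∂μ = ∑ i, ∫ ω, (A ω i - U ω i) ^ 2 ∂μ := by
    rw [sum_int (fun ω => A ω - U ω) (hA2.sub hU2)]
    exact Finset.sum_congr rfl fun i _ =>
      integral_congr_ae (Filter.Eventually.of_forall fun ω => by simp [PiLp.sub_apply])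
  have e2 : ∫ ω, ‖A ω - B ω‖ ^ 2 ∂μ = ∑ i, ∫ ω, (A ω i - B ω i) ^ 2 ∂μ := by
    rw [sum_int (fun ω => A ω - B ω) (hA2.sub hBL2)]
    exact Finset.sum_congr rfl fun i _ =>
      integral_congr_ae (Filter.Eventually.of_forall fun ω => by simp [PiLp.sub_apply])
  have e3 : ∫ ω, ‖B ω - U ω‖ ^ 2 ∂μ = ∑ i, ∫ ω, (B ω i - U ω i) ^ 2 ∂μ := by
    rw [sum_int (fun ω => B ω - U ω) (hBL2.sub hU2)]
    exact Finset.sum_congr rfl fun i _ =>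
      integral_congr_ae (Filter.Eventually.of_forall fun ω => by simp [PiLp.sub_apply])
  rw [e1, e2, e3, ← Finset.sum_add_distrib]
  exact Finset.sum_congr rfl fun i _ => key i

/-- Pythagorean decomposition for conditional flow matching: if `ubar ∘ xt` is (a version
of) the conditional expectation of the conditional field `U = u_t(x_t|z)` given `xt`,
then for every square-integrable predictor `f`,
`E‖f(x_t) - U‖² = E‖f(x_t) - ubar(x_t)‖² + E‖ubar(x_t) - U‖²`.
Hence the conditional (tractable) loss differs from the marginal loss by a constant
independent of the predictor, so their gradients in the parameters agree. -/
theorem conditional_marginal_loss_pythagoras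
    (d : ℕ) (Ω : Type*) [MeasureSpace Ω] [IsProbabilityMeasure (ℙ : Measure Ω)]
    (xt : Ω → EuclideanSpace ℝ (Fin d)) (hxt : Measurable xt)
    (U : Ω → EuclideanSpace ℝ (Fin d)) (hU : MemLp U 2 (ℙ : Measure Ω))
    (ubar : EuclideanSpace ℝ (Fin d) → EuclideanSpace ℝ (Fin d)) (hubar : Measurable ubar)
    (hcond : (ℙ : Measure Ω)[U | MeasurableSpace.comap xt inferInstance]
        =ᵐ[(ℙ : Measure Ω)] fun ω => ubar (xt ω))
    (f : EuclideanSpace ℝ (Fin d) → EuclideanSpace ℝ (Fin d)) (hf : Measurable f)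
    (hf2 : MemLp (fun ω => f (xt ω)) 2 (ℙ : Measure Ω)) :
    (∫ ω, ‖f (xt ω) - U ω‖ ^ 2)
      = (∫ ω, ‖f (xt ω) - ubar (xt ω)‖ ^ 2) + ∫ ω, ‖ubar (xt ω) - U ω‖ ^ 2 := by
  have hxtm : Measurable[MeasurableSpace.comap xt inferInstance] xt :=
    Measurable.of_comap_le le_rfl
  exact euclidean_pyth_aux (μ := (ℙ : Measure Ω)) hxt.comap_le hf2 hU
    (hf.comp hxtm) (hubar.comp hxtm) hcond
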